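/- If G and H are connected graphs with |V(G)|, |V(H)| ≥ 2, and c is an exact r-coloring of G □ H with r ≥ 3 that avoids rainbow 3-APs, then each copy G_i of G in G □ H (corresponding to a fixed vertex w_i of H) receives at most 2 colors under c. -/

import Mathlib

open SimpleGraph

/-- A rainbow 3-AP in `G` under coloring `c`: three vertices with
`d(v₁,v₂) = d(v₂,v₃)` receiving pairwise distinct colors. -/
def HasRainbow3AP {V C : Type*} (G : SimpleGraph V) (c : V → C) : Prop :=
  ∃ v₁ v₂ v₃ : V, G.dist v₁ v₂ = G.dist v₂ v₃ ∧
    c v₁ ≠ c v₂ ∧ c v₂ ≠ c v₃ ∧ c v₁ ≠ c v₃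

/-- The anti-van der Waerden number `aw(G,3)`: the least positive `r` such that
every surjective coloring with `r` colors yields a rainbow 3-AP. -/
noncomputable def aw {V : Type*} (G : SimpleGraph V) : ℕ :=
  sInf {r : ℕ | 0 < r ∧ ∀ c : V → Fin r, Function.Surjective c → HasRainbow3AP G c}

lemma boxWalkLen {V W : Type*} {G : SimpleGraph V} {H : SimpleGraph W}
    (hG : G.Connected) (hH : H.Connected) {p q : V × W} (w : (G □ H).Walk p q) :
    G.dist p.1 q.1 + H.dist p.2 q.2 ≤ w.length := by
  induction w with
  | nil => simp
  | @cons a b d h w ih =>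
    rcases h with ⟨h1, h2⟩ | ⟨h1, h2⟩
    · have t1 : G.dist a.1 d.1 ≤ G.dist a.1 b.1 + G.dist b.1 d.1 := hG.dist_triangle
      have t2 : G.dist a.1 b.1 ≤ 1 := by simpa using SimpleGraph.dist_le h1.toWalk
      have e : H.dist a.2 d.2 = H.dist b.2 d.2 := by rw [h2]
      show G.dist a.1 d.1 + H.dist a.2 d.2 ≤ w.length + 1
      omega
    · have t1 : H.dist a.2 d.2 ≤ H.dist a.2 b.2 + H.dist b.2 d.2 := hH.dist_triangle
      have t2 : H.dist a.2 b.2 ≤ 1 := by simpa using SimpleGraph.dist_le h1.toWalk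
      have e : G.dist a.1 d.1 = G.dist b.1 d.1 := by rw [h2]
      show G.dist a.1 d.1 + H.dist a.2 d.2 ≤ w.length + 1
      omega

lemma boxDist {V W : Type*} {G : SimpleGraph V} {H : SimpleGraph W}
    (hG : G.Connected) (hH : H.Connected) (a b : V) (s t : W) :
    (G □ H).dist (a, s) (b, t) = G.dist a b + H.dist s t := by
  apply le_antisymm
  · obtain ⟨w₁, h1⟩ := hG.exists_walk_length_eq_dist a b
    obtain ⟨w₂, h2⟩ := hH.exists_walk_length_eq_dist s t
    have := SimpleGraph.dist_le ((w₁.boxProdLeft H s).append (w₂.boxProdRight G b))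
    have e1 : (w₁.boxProdLeft H s).length = w₁.length := Walk.length_map _ _
    have e2 : (w₂.boxProdRight G b).length = w₂.length := Walk.length_map _ _
    rw [Walk.length_append, e1, e2, h1, h2] at this
    exact this
  · obtain ⟨w, hw⟩ := ((connected_boxProd.mpr ⟨hG, hH⟩)).exists_walk_length_eq_dist (a, s) (b, t)
    rw [← hw]
    exact boxWalkLen hG hH w

set_option maxHeartbeats 1600000
lemma keyLemma {V W : Type*} {G : SimpleGraph V} {H : SimpleGraph W} {C : Type*}
    {c : V × W → C}
    (hG : G.Connected) (hH : H.Connected)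
    (rb : ∀ v₁ v₂ v₃ : V × W, (G □ H).dist v₁ v₂ = (G □ H).dist v₂ v₃ →
      c v₁ = c v₂ ∨ c v₂ = c v₃ ∨ c v₁ = c v₃) :
    ∀ k : ℕ, ∀ i j : W, H.Adj i j → ∀ u v z : V, G.Adj u v →
      G.dist z u = k → G.dist z v = k + 1 →
      c (u, i) ≠ c (v, i) → c (z, i) ≠ c (u, i) → c (z, i) ≠ c (v, i) → False := by
  intro k
  induction k using Nat.strong_induction_on with
  | _ k IH =>
  intro i j hij u v z huv hzu hzv hαβ hγα hγβ
  have D := boxDist hG hH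
  have hji1 : H.dist j i = 1 := by
    rw [SimpleGraph.dist_comm]; exact dist_eq_one_iff_adj.mpr hij
  have hij1 : H.dist i j = 1 := dist_eq_one_iff_adj.mpr hij
  have huv1 : G.dist u v = 1 := dist_eq_one_iff_adj.mpr huv
  have hvu1 : G.dist v u = 1 := by rw [SimpleGraph.dist_comm]; exact huv1
  rcases Nat.eq_zero_or_pos k with hk0 | hkpos
  · cases hG.dist_eq_zero_iff.mp (show G.dist z u = 0 by omega)
    exact hγα rfl
  rcases Nat.lt_or_ge k 2 with hk1 | hk2
  · -- k = 1 : rainbow (z,i),(u,i),(v,i)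
    have hk : k = 1 := by omega
    have := rb (z, i) (u, i) (v, i) (by
      simp only [D, SimpleGraph.dist_self, hzu, huv1, hk])
    tauto
  -- k ≥ 2
  have hzu' : G.dist u z = k := by rw [SimpleGraph.dist_comm]; exact hzu
  have hzv' : G.dist v z = k + 1 := by rw [SimpleGraph.dist_comm]; exact hzv
  -- Step A for u : c (u,j) ∈ {c (u,i), c (v,i)}
  have hA := rb (u, j) (u, i) (v, i) (by
    simp only [D, SimpleGraph.dist_self, hji1, huv1])
  -- Step B : c (u,j) = c (v,i)
  have hB : c (u, j) = c (v, i) := by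
    have h2 := rb (u, j) (z, i) (v, i) (by
      simp only [D, SimpleGraph.dist_self, hji1, hzu', hzv', hzu, hzv])
    rcases hA with h | h | h <;> rcases h2 with h' | h' | h' <;> grind
  -- Get neighbor w of z on a geodesic to u
  obtain ⟨p, hp⟩ := hG.exists_walk_length_eq_dist z u
  rw [hzu] at hp
  cases p with
  | nil => simp at hp; omega
  | @cons _ w _ hzw p' =>
    simp only [Walk.length_cons] at hp
    have hp' : p'.length = k - 1 := by omega
    have hzw1 : G.dist z w = 1 := dist_eq_one_iff_adj.mpr hzw
    have hwu : G.dist w u = k - 1 := by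
      have le1 : G.dist w u ≤ k - 1 := hp' ▸ SimpleGraph.dist_le p'
      have tz : G.dist z u ≤ G.dist z w + G.dist w u := hG.dist_triangle
      omega
    have hwv : G.dist w v = k := by
      have le1 : G.dist w v ≤ G.dist w u + G.dist u v := hG.dist_triangle
      have ge1 : G.dist z v ≤ G.dist z w + G.dist w v := hG.dist_triangle
      omega
    have hwv' : G.dist w v = (k - 1) + 1 := by omega
    by_cases hη1 : c (w, i) = c (z, i)
    · -- w has z's color : smaller configuration (u,v,w) in copy i
      exact IH (k - 1) (by omega) i j hij u v w huv hwu hwv' hαβ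
        (by grind) (by grind)
    · by_cases hη2 : c (w, i) = c (u, i)
      · -- the long case
        have hwz1 : G.dist w z = 1 := by rw [SimpleGraph.dist_comm]; exact hzw1
        have hwu' : G.dist u w = k - 1 := by rw [SimpleGraph.dist_comm]; exact hwu
        have hwv'' : G.dist v w = k := by rw [SimpleGraph.dist_comm]; exact hwv
        -- Step D1 : c (w,j) ∈ {c (w,i), c (z,i)}
        have hD1 := rb (w, j) (w, i) (z, i) (by
          simp only [D, SimpleGraph.dist_self, hji1, hwz1])
        -- Step D2 : c (w,j) = c (z,i)
        have hD2 : c (w, j) = c (z, i) := by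
          have h2 := rb (w, j) (v, i) (z, i) (by
            simp only [D, SimpleGraph.dist_self, hji1, hwv, hzv', hzv])
          rcases hD1 with h | h | h <;> rcases h2 with h' | h' | h' <;> grind
        -- Step A for v : c (v,j) ∈ {c (v,i), c (u,i)}
        have hAv := rb (v, j) (v, i) (u, i) (by
          simp only [D, SimpleGraph.dist_self, hji1, hvu1])
        -- Step E : c (v,j) = c (u,i)
        have hE : c (v, j) = c (u, i) := by
          have h2 := rb (v, j) (w, j) (u, i) (by
            simp only [D, SimpleGraph.dist_self, hji1, hwv'', hwu]
            omega)
          rcases hAv with h | h | h <;> rcases h2 with h' | h' | h' <;> grind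
        -- Step F : smaller configuration (u,v,w) in copy j
        exact IH (k - 1) (by omega) j i hij.symm u v w huv hwu hwv'
          (by grind) (by grind) (by grind)
      · -- w's color differs from both u's and z's : configuration (w,z,u) in copy i
        have hd1 : G.dist u w = k - 1 := by rw [SimpleGraph.dist_comm]; exact hwu
        have hd2 : G.dist u z = (k - 1) + 1 := by omega
        exact IH (k - 1) (by omega) i j hij w z u hzw.symm hd1 hd2
          (by grind) (by grind) (by grind)

lemma exists_adj_ne {V C : Type*} {G : SimpleGraph V} {f : V → C} :
    ∀ {a b : V}, G.Walk a b → f a ≠ f b → ∃ x y, G.Adj x y ∧ f x ≠ f y := by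
  intro a b w
  induction w with
  | nil => intro h; exact absurd rfl h
  | @cons a a' b h p ih =>
    intro hab
    by_cases hfc : f a = f a'
    · exact ih (fun h' => hab (hfc.trans h'))
    · exact ⟨a, a', h, hfc⟩


theorem stmt_3 {V W : Type*} [Fintype V] [Fintype W]
    (G : SimpleGraph V) (H : SimpleGraph W)
    (hG : G.Connected) (hH : H.Connected)
    (hV : 2 ≤ Fintype.card V) (hW : 2 ≤ Fintype.card W)
    (r : ℕ) (hr : 3 ≤ r) (c : V × W → Fin r) (hc : Function.Surjective c)
    (hrf : ¬ HasRainbow3AP (G □ H) c) (i : W) :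
    (Finset.univ.image (fun u : V => c (u, i))).card ≤ 2 := by
  
  by_contra hcard
  push_neg at hcard
  -- rainbow-free in usable form
  have rb : ∀ v₁ v₂ v₃ : V × W, (G □ H).dist v₁ v₂ = (G □ H).dist v₂ v₃ →
      c v₁ = c v₂ ∨ c v₂ = c v₃ ∨ c v₁ = c v₃ := by
    intro v₁ v₂ v₃ hd
    by_contra hcc
    push_neg at hcc
    exact hrf ⟨v₁, v₂, v₃, hd, hcc.1, hcc.2.1, hcc.2.2⟩
  set S := Finset.univ.image (fun u : V => c (u, i)) with hS
  -- two vertices of different colors in copy i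
  obtain ⟨κ₁, hκ₁, κ₂, hκ₂, hκne⟩ := Finset.one_lt_card.mp (by omega : 1 < S.card)
  obtain ⟨a, -, ha⟩ := Finset.mem_image.mp hκ₁
  obtain ⟨b, -, hb⟩ := Finset.mem_image.mp hκ₂
  -- an edge of G whose endpoints differ in color in copy i
  have ha' : c (a, i) = κ₁ := ha
  have hb' : c (b, i) = κ₂ := hb
  obtain ⟨x, y, hxy, hcxy⟩ := exists_adj_ne (f := fun u : V => c (u, i)) (hG a b).some
    (by show c (a, i) ≠ c (b, i); rw [ha', hb']; exact hκne)
  have hcxy' : c (x, i) ≠ c (y, i) := hcxy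
  -- a vertex of a third color in copy i
  have h3 : ∃ κ ∈ S, κ ≠ c (x, i) ∧ κ ≠ c (y, i) := by
    by_contra hno
    push_neg at hno
    have hsub : S ⊆ {c (x, i), c (y, i)} := by
      intro κ hκ
      by_cases h : κ = c (x, i)
      · simp [h]
      · simp [hno κ hκ h]
    have h1 := Finset.card_le_card hsub
    have h2 := Finset.card_insert_le (c (x, i)) ({c (y, i)} : Finset (Fin r))
    simp only [Finset.card_singleton] at h2
    omega
  obtain ⟨κ, hκS, hκx, hκy⟩ := h3
  obtain ⟨t, -, ht⟩ := Finset.mem_image.mp hκS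
  have ht' : c (t, i) = κ := ht
  have D := boxDist hG hH
  -- the distances from t to x and y differ
  have hne : G.dist t x ≠ G.dist t y := by
    intro he
    have := rb (x, i) (t, i) (y, i) (by
      simp only [D, SimpleGraph.dist_self, Nat.add_zero]
      rw [SimpleGraph.dist_comm]; exact he)
    rcases this with h | h | h
    · exact hκx (ht'.symm.trans h.symm)
    · exact hκy (ht'.symm.trans h)
    · exact hcxy' h
  -- a neighbor j of i in H
  obtain ⟨i', hi'⟩ := Fintype.exists_ne_of_one_lt_card (by omega) i
  obtain ⟨q⟩ := hH i i'
  obtain ⟨j, hij⟩ : ∃ j, H.Adj i j := by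
    cases q with
    | nil => exact absurd rfl hi'
    | cons hadj _ => exact ⟨_, hadj⟩
  have hxy1 : G.dist x y = 1 := dist_eq_one_iff_adj.mpr hxy
  have hyx1 : G.dist y x = 1 := by rw [SimpleGraph.dist_comm]; exact hxy1
  have t1 : G.dist t x ≤ G.dist t y + G.dist y x := hG.dist_triangle
  have t2 : G.dist t y ≤ G.dist t x + G.dist x y := hG.dist_triangle
  rcases Nat.lt_or_ge (G.dist t x) (G.dist t y) with hlt | hge
  · exact keyLemma hG hH rb (G.dist t x) i j hij x y t hxy rfl (by omega)
      hcxy' (fun h => hκx (ht'.symm.trans h)) (fun h => hκy (ht'.symm.trans h))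
  · exact keyLemma hG hH rb (G.dist t y) i j hij y x t hxy.symm rfl (by omega)
      (fun h => hcxy' h.symm) (fun h => hκy (ht'.symm.trans h))
      (fun h => hκx (ht'.symm.trans h))
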